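/- For every real number p ≥ 9, the optimal Khintchine constant B_p = 2^{(p−2)/2} · Γ((p+1)/2) / Γ(3/2) satisfies B_p ≤ (p/2.5)^{p/2}, where Γ denotes the Gamma function. -/

import Mathlib

open Real

/- ### Numeric bounds on `exp` and `log` -/

lemma kcb_exp_ub4 {x : ℝ} (h1 : 0 ≤ x) (h2 : x ≤ 1) :
    Real.exp x ≤ 1 + x + x^2/2 + x^3/6 + x^4 * 5/96 := by
  have h := Real.exp_bound' h1 h2 (n := 4) (by norm_num)
  simp [Finset.sum_range_succ] at h
  norm_num [Nat.factorial] at h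
  nlinarith [h]

lemma kcb_exp_lb7 {x : ℝ} (h1 : 0 ≤ x) :
    1 + x + x^2/2 + x^3/6 + x^4/24 + x^5/120 + x^6/720 ≤ Real.exp x := by
  have h := Real.sum_le_exp_of_nonneg h1 7
  simp [Finset.sum_range_succ] at h
  norm_num [Nat.factorial] at h
  nlinarith [h]

lemma kcb_log9_ge : (2.197 : ℝ) ≤ Real.log 9 := by
  rw [Real.le_log_iff_exp_le (by norm_num)]
  rw [show (2.197 : ℝ) = 1 + 1 + 0.197 by norm_num, Real.exp_add, Real.exp_add]
  have e1 := Real.exp_one_lt_d9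
  have e2 := kcb_exp_ub4 (x := 0.197) (by norm_num) (by norm_num)
  have p1 := Real.exp_pos (1:ℝ)
  have p2 := Real.exp_pos (0.197:ℝ)
  nlinarith [e1, e2, p1, p2]

lemma kcb_log10_ge : (2.302 : ℝ) ≤ Real.log 10 := by
  rw [Real.le_log_iff_exp_le (by norm_num)]
  rw [show (2.302 : ℝ) = 1 + 1 + 0.302 by norm_num, Real.exp_add, Real.exp_add]
  have e1 := Real.exp_one_lt_d9
  have e2 := kcb_exp_ub4 (x := 0.302) (by norm_num) (by norm_num)
  have p1 := Real.exp_pos (1:ℝ)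
  have p2 := Real.exp_pos (0.302:ℝ)
  nlinarith [e1, e2, p1, p2]

lemma kcb_log11_ge : (2.3973 : ℝ) ≤ Real.log 11 := by
  rw [Real.le_log_iff_exp_le (by norm_num)]
  rw [show (2.3973 : ℝ) = 1 + 1 + 0.3973 by norm_num, Real.exp_add, Real.exp_add]
  have e1 := Real.exp_one_lt_d9
  have e2 := kcb_exp_ub4 (x := 0.3973) (by norm_num) (by norm_num)
  have p1 := Real.exp_pos (1:ℝ)
  have p2 := Real.exp_pos (0.3973:ℝ)
  nlinarith [e1, e2, p1, p2]

lemma kcb_logpi_ge : (1.1446 : ℝ) ≤ Real.log (Real.pi) := by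
  rw [Real.le_log_iff_exp_le Real.pi_pos]
  rw [show (1.1446 : ℝ) = 1 + 0.1446 by norm_num, Real.exp_add]
  have e1 := Real.exp_one_lt_d9
  have e2 := kcb_exp_ub4 (x := 0.1446) (by norm_num) (by norm_num)
  have p1 := Real.exp_pos (1:ℝ)
  have p2 := Real.exp_pos (0.1446:ℝ)
  have hpi := Real.pi_gt_d6
  nlinarith [e1, e2, p1, p2, hpi]

lemma kcb_log5_le : Real.log 5 ≤ (1.6096 : ℝ) := by
  rw [Real.log_le_iff_le_exp (by norm_num)]
  rw [show (1.6096 : ℝ) = 1 + 0.6096 by norm_num, Real.exp_add]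
  have e1 := Real.exp_one_gt_d9
  have e2 := kcb_exp_lb7 (x := 0.6096) (by norm_num)
  have p2 := Real.exp_pos (0.6096:ℝ)
  nlinarith [e1, e2, p2]

lemma kcb_log24_le : Real.log 24 ≤ (3.1782 : ℝ) := by
  rw [Real.log_le_iff_le_exp (by norm_num)]
  rw [show (3.1782 : ℝ) = 1 + 1 + 1 + 0.1782 by norm_num, Real.exp_add, Real.exp_add,
    Real.exp_add]
  have e1 : (2.7182818283:ℝ) ≤ rexp 1 := Real.exp_one_gt_d9.le
  have e2 : (1.19505:ℝ) ≤ rexp 0.1782 := by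
    have := kcb_exp_lb7 (x := 0.1782) (by norm_num); nlinarith [this]
  calc (24:ℝ) ≤ 2.7182818283 * 2.7182818283 * 2.7182818283 * 1.19505 := by norm_num
    _ ≤ rexp 1 * rexp 1 * rexp 1 * rexp 0.1782 := by gcongr <;> norm_num

lemma kcb_log25_le : Real.log 2.5 ≤ (0.93 : ℝ) := by
  rw [Real.log_le_iff_le_exp (by norm_num)]
  have e2 := kcb_exp_lb7 (x := 0.93) (by norm_num)
  nlinarith [e2]

/- ### The inductive step inequality -/

lemma kcb_key_step (q : ℝ) (hq : 9 ≤ q) :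
    (q + 1) * (q / 2.5) ^ (q / 2) ≤ ((q + 2) / 2.5) ^ ((q + 2) / 2) := by
  have hq0 : (0:ℝ) < q := by linarith
  have h1 : (0:ℝ) < q + 1 := by linarith
  have h2 : (0:ℝ) < q + 2 := by linarith
  have hL : (0:ℝ) < (q + 1) * (q / 2.5) ^ (q / 2) := by positivity
  have hR : (0:ℝ) < ((q + 2) / 2.5) ^ ((q + 2) / 2) := by positivity
  rw [← Real.exp_log hL, ← Real.exp_log hR]
  apply Real.exp_le_exp.mpr
  rw [Real.log_mul (by positivity) (by positivity),
    Real.log_rpow (by positivity), Real.log_rpow (by positivity),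
    Real.log_div (by positivity) (by norm_num),
    Real.log_div (by positivity) (by norm_num)]
  have hA : Real.log q - Real.log (q + 1) ≤ q / (q + 1) - 1 := by
    have h := Real.log_le_sub_one_of_pos (show 0 < q / (q + 1) by positivity)
    rwa [Real.log_div (by positivity) (by positivity)] at h
  have hB : Real.log (q + 1) - Real.log (q + 2) ≤ (q + 1) / (q + 2) - 1 := by
    have h := Real.log_le_sub_one_of_pos (show 0 < (q + 1) / (q + 2) by positivity)
    rwa [Real.log_div (by positivity) (by positivity)] at h
  have hd1 : q / (q + 1) - 1 = -(1 / (q + 1)) := by field_simp; ring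
  have hd2 : (q + 1) / (q + 2) - 1 = -(1 / (q + 2)) := by field_simp; ring
  rw [hd1] at hA
  rw [hd2] at hB
  have l25 := kcb_log25_le
  have key : (0.93 : ℝ) ≤ q / 2 * (1 / (q + 1) + 1 / (q + 2)) + 1 / (q + 2) := by
    have expand : q / 2 * (1 / (q + 1) + 1 / (q + 2)) + 1 / (q + 2)
        = (q*(q+2) + q*(q+1) + 2*(q+1)) / (2*(q+1)*(q+2)) := by
      field_simp
    rw [expand, le_div_iff₀ (by positivity)]
    nlinarith [hq, sq_nonneg (q-9)]
  have hmul : q / 2 * (1 / (q + 1) + 1 / (q + 2)) ≤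
      q / 2 * ((Real.log (q+2) - Real.log (q+1)) + (Real.log (q+1) - Real.log q)) := by
    apply mul_le_mul_of_nonneg_left _ (by positivity)
    linarith
  nlinarith [hmul, key, hA, hB, l25]

/- ### The base case, `9 ≤ p ≤ 11`, via log-convexity of Γ -/

set_option maxHeartbeats 1000000 in
lemma kcb_base_case (p : ℝ) (h9 : 9 ≤ p) (h11 : p ≤ 11) :
    (2 : ℝ) ^ ((p - 2) / 2) * Real.Gamma ((p + 1) / 2) / Real.Gamma (3 / 2) ≤
      (p / 2.5) ^ (p / 2) := by
  have hp0 : (0:ℝ) < p := by linarith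
  have hx0 : (0:ℝ) < (p + 1) / 2 := by linarith
  have hG : 0 < Real.Gamma ((p + 1) / 2) := Real.Gamma_pos_of_pos hx0
  have hG32 : 0 < Real.Gamma (3 / 2) := Real.Gamma_pos_of_pos (by norm_num)
  have hL : (0:ℝ) < (2 : ℝ) ^ ((p - 2) / 2) * Real.Gamma ((p + 1) / 2) / Real.Gamma (3 / 2) := by
    positivity
  have hR : (0:ℝ) < (p / 2.5) ^ (p / 2) := by positivity
  rw [← Real.exp_log hL, ← Real.exp_log hR]
  apply Real.exp_le_exp.mpr
  rw [Real.log_rpow (by positivity), Real.log_div (by positivity) hG32.ne',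
    Real.log_mul (by positivity) hG.ne', Real.log_rpow (by norm_num),
    Real.log_div (by positivity) (by norm_num)]
  have hG32v : Real.Gamma (3/2) = Real.sqrt Real.pi / 2 := by
    rw [show (3/2 : ℝ) = 1/2 + 1 by norm_num, Real.Gamma_add_one (by norm_num),
      Real.Gamma_one_half_eq]
    ring
  have hlogG32 : Real.log (Real.Gamma (3/2)) = Real.log Real.pi / 2 - Real.log 2 := by
    rw [hG32v, Real.log_div (by positivity) (by norm_num), Real.log_sqrt Real.pi_nonneg]
  have hinterp : Real.log (Real.Gamma ((p + 1) / 2)) ≤ Real.log 24 + (p - 9) / 2 * Real.log 5 := by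
    have hc := Real.convexOn_log_Gamma.2 (show (5:ℝ) ∈ Set.Ioi 0 by norm_num)
      (show (6:ℝ) ∈ Set.Ioi 0 by norm_num)
      (show (0:ℝ) ≤ (11 - p)/2 by linarith) (show (0:ℝ) ≤ (p - 9)/2 by linarith)
      (by ring)
    simp only [Function.comp_apply, smul_eq_mul] at hc
    have hxeq : (11 - p)/2 * (5:ℝ) + (p - 9)/2 * (6:ℝ) = (p + 1)/2 := by ring
    rw [hxeq] at hc
    have hG5 : Real.Gamma 5 = 24 := by
      rw [show (5:ℝ) = (4:ℕ) + 1 by norm_num, Real.Gamma_nat_eq_factorial]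
      norm_num [Nat.factorial]
    have hG6 : Real.Gamma 6 = 120 := by
      rw [show (6:ℝ) = (5:ℕ) + 1 by norm_num, Real.Gamma_nat_eq_factorial]
      norm_num [Nat.factorial]
    rw [hG5, hG6] at hc
    have h120 : Real.log 120 = Real.log 24 + Real.log 5 := by
      rw [show (120:ℝ) = 24 * 5 by norm_num, Real.log_mul (by norm_num) (by norm_num)]
    rw [h120] at hc
    calc Real.log (Real.Gamma ((p+1)/2))
        ≤ (11 - p)/2 * Real.log 24 + (p - 9)/2 * (Real.log 24 + Real.log 5) := hc
      _ = Real.log 24 + (p - 9)/2 * Real.log 5 := by ring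
  have h25 : Real.log 2.5 = Real.log 5 - Real.log 2 := by
    rw [show (2.5:ℝ) = 5 / 2 by norm_num, Real.log_div (by norm_num) (by norm_num)]
  rw [hlogG32, h25]
  have U5 := kcb_log5_le
  have U24 := kcb_log24_le
  have Lpi := kcb_logpi_ge
  rcases le_or_gt p 10 with hc10 | hc10
  · have hchord : (10 - p) * Real.log 9 + (p - 9) * Real.log 10 ≤ Real.log p := by
      have h := strictConcaveOn_log_Ioi.concaveOn.2 (show (9:ℝ) ∈ Set.Ioi 0 by norm_num)
        (show (10:ℝ) ∈ Set.Ioi 0 by norm_num)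
        (show (0:ℝ) ≤ 10 - p by linarith) (show (0:ℝ) ≤ p - 9 by linarith) (by ring)
      simp only [smul_eq_mul] at h
      have : (10 - p) * 9 + (p - 9) * 10 = p := by ring
      rwa [this] at h
    have hlp : 2.197 + 0.105 * (p - 9) ≤ Real.log p := by
      nlinarith [kcb_log9_ge, kcb_log10_ge, hchord]
    have hmul : p/2 * (2.197 + 0.105 * (p - 9)) ≤ p/2 * Real.log p :=
      mul_le_mul_of_nonneg_left hlp (by linarith)
    have hmul5 : (p - 4.5) * Real.log 5 ≤ (p - 4.5) * 1.6096 :=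
      mul_le_mul_of_nonneg_left U5 (by linarith)
    have quad : (0:ℝ) ≤ p/2 * (2.197 + 0.105 * (p - 9)) - (p - 4.5) * 1.6096
        - 3.1782 + 1.1446/2 := by
      nlinarith [sq_nonneg (p - 9.368)]
    linarith [hmul, hmul5, hinterp, U24, Lpi, quad]
  · have hchord : (11 - p) * Real.log 10 + (p - 10) * Real.log 11 ≤ Real.log p := by
      have h := strictConcaveOn_log_Ioi.concaveOn.2 (show (10:ℝ) ∈ Set.Ioi 0 by norm_num)
        (show (11:ℝ) ∈ Set.Ioi 0 by norm_num)
        (show (0:ℝ) ≤ 11 - p by linarith) (show (0:ℝ) ≤ p - 10 by linarith) (by ring)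
      simp only [smul_eq_mul] at h
      have : (11 - p) * 10 + (p - 10) * 11 = p := by ring
      rwa [this] at h
    have hlp : 2.302 + 0.0953 * (p - 10) ≤ Real.log p := by
      nlinarith [kcb_log10_ge, kcb_log11_ge, hchord]
    have hmul : p/2 * (2.302 + 0.0953 * (p - 10)) ≤ p/2 * Real.log p :=
      mul_le_mul_of_nonneg_left hlp (by linarith)
    have hmul5 : (p - 4.5) * Real.log 5 ≤ (p - 4.5) * 1.6096 :=
      mul_le_mul_of_nonneg_left U5 (by linarith)
    have quad : (0:ℝ) ≤ p/2 * (2.302 + 0.0953 * (p - 10)) - (p - 4.5) * 1.6096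
        - 3.1782 + 1.1446/2 := by
      nlinarith [sq_nonneg (p - 10), hc10.le]
    linarith [hmul, hmul5, hinterp, U24, Lpi, quad]

/- ### The inductive step -/

lemma kcb_step (q : ℝ) (hq : 9 ≤ q)
    (ih : (2 : ℝ) ^ ((q - 2) / 2) * Real.Gamma ((q + 1) / 2) / Real.Gamma (3 / 2) ≤
      (q / 2.5) ^ (q / 2)) :
    (2 : ℝ) ^ ((q + 2 - 2) / 2) * Real.Gamma ((q + 2 + 1) / 2) / Real.Gamma (3 / 2) ≤
      ((q + 2) / 2.5) ^ ((q + 2) / 2) := by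
  have hG32 : 0 < Real.Gamma (3 / 2) := Real.Gamma_pos_of_pos (by norm_num)
  have hΓ : Real.Gamma ((q + 2 + 1) / 2) = ((q + 1) / 2) * Real.Gamma ((q + 1) / 2) := by
    rw [show (q + 2 + 1) / 2 = (q + 1) / 2 + 1 by ring,
      Real.Gamma_add_one (by positivity)]
  have h2 : (2:ℝ) ^ ((q + 2 - 2) / 2) = 2 * 2 ^ ((q - 2) / 2) := by
    rw [show (q + 2 - 2) / 2 = (q - 2) / 2 + 1 by ring, Real.rpow_add_one (by norm_num)]
    ring
  calc (2 : ℝ) ^ ((q + 2 - 2) / 2) * Real.Gamma ((q + 2 + 1) / 2) / Real.Gamma (3 / 2)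
      = (q + 1) * ((2 : ℝ) ^ ((q - 2) / 2) * Real.Gamma ((q + 1) / 2) / Real.Gamma (3 / 2)) := by
        rw [hΓ, h2]; ring
    _ ≤ (q + 1) * ((q / 2.5) ^ (q / 2)) :=
        mul_le_mul_of_nonneg_left ih (by linarith)
    _ ≤ ((q + 2) / 2.5) ^ ((q + 2) / 2) := kcb_key_step q hq

lemma kcb_main (n : ℕ) : ∀ p : ℝ, 9 ≤ p → p ≤ 11 + 2 * n →
    (2 : ℝ) ^ ((p - 2) / 2) * Real.Gamma ((p + 1) / 2) / Real.Gamma (3 / 2) ≤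
      (p / 2.5) ^ (p / 2) := by
  induction n with
  | zero =>
    intro p hp hn
    exact kcb_base_case p hp (by push_cast at hn; linarith)
  | succ n ih =>
    intro p hp hn
    rcases le_or_gt p (11 + 2 * n) with h | h
    · exact ih p hp h
    · have h9 : (9:ℝ) ≤ p - 2 := by
        have : (0:ℝ) ≤ (n:ℝ) := Nat.cast_nonneg n
        linarith
      have hle : p - 2 ≤ 11 + 2 * n := by push_cast at hn; linarith
      have := kcb_step (p - 2) h9 (ih (p - 2) h9 hle)
      simpa [show p - 2 + 2 = p by ring] using this

/-- For every real `p ≥ 9`, the optimal Khintchine constant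
`B_p = 2^((p-2)/2) * Γ((p+1)/2) / Γ(3/2)` satisfies `B_p ≤ (p/2.5)^(p/2)`. -/
theorem khintchine_constant_bound (p : ℝ) (hp : 9 ≤ p) :
    (2 : ℝ) ^ ((p - 2) / 2) * Real.Gamma ((p + 1) / 2) / Real.Gamma (3 / 2) ≤
      (p / 2.5) ^ (p / 2) := by
  obtain ⟨n, hn⟩ : ∃ n : ℕ, p ≤ 11 + 2 * n := by
    refine ⟨⌈(p - 11) / 2⌉₊, ?_⟩
    have := Nat.le_ceil ((p - 11) / 2)
    linarith
  exact kcb_main n p hp hn
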